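/- Let G1 and G2 be graphs of maximum degree at most 3, and suppose G1 is 3-critical. If G is a graph of maximum degree at most 3 that is a Hajós join of G1 and G2, then G is 3-critical if and only if G2 is 3-critical. -/

import Mathlib

/-- A proper edge coloring of `G` with `n` colors: edges sharing an endpoint
get distinct colors. -/
def EdgeColorable {V : Type*} (G : SimpleGraph V) (n : ℕ) : Prop :=
  ∃ C : G.edgeSet → Fin n, ∀ e₁ e₂ : G.edgeSet, e₁ ≠ e₂ →
    (∃ v, v ∈ (e₁ : Sym2 V) ∧ v ∈ (e₂ : Sym2 V)) → C e₁ ≠ C e₂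

/-- The chromatic index (edge chromatic number) of `G`. -/
noncomputable def chromIndex {V : Type*} (G : SimpleGraph V) : ℕ :=
  sInf {n | EdgeColorable G n}

/-- The degree of a vertex. -/
noncomputable def deg {V : Type*} (G : SimpleGraph V) (v : V) : ℕ :=
  (G.neighborSet v).ncard

/-- A graph with maximum degree `k` is `k`-critical if `χ'(G) = k + 1` and
`χ'(G - e) = k` for every edge `e`. -/
def IsCritical {V : Type*} (k : ℕ) (G : SimpleGraph V) : Prop :=
  (∀ v, deg G v ≤ k) ∧ (∃ v, deg G v = k) ∧
  chromIndex G = k + 1 ∧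
  ∀ e ∈ G.edgeSet, chromIndex (G.deleteEdges {e}) = k

/-- The Hajós join of `G₁` and `G₂` along edges `v₁v₂` and `v₃v₄`: delete the
two edges, identify `v₁` with `v₃`, and add the edge `v₂v₄`. -/
def hajosJoin {V₁ V₂ : Type*} (G₁ : SimpleGraph V₁) (G₂ : SimpleGraph V₂)
    (v₁ v₂ : V₁) (v₃ v₄ : V₂) :
    SimpleGraph (V₁ ⊕ {x : V₂ // x ≠ v₃}) :=
  SimpleGraph.fromRel fun a b =>
    match a, b with
    | Sum.inl x, Sum.inl y => G₁.Adj x y ∧ s(x, y) ≠ s(v₁, v₂)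
    | Sum.inl x, Sum.inr y => (x = v₁ ∧ G₂.Adj v₃ y.1 ∧ y.1 ≠ v₄) ∨ (x = v₂ ∧ y.1 = v₄)
    | Sum.inr _, Sum.inl _ => False
    | Sum.inr x, Sum.inr y => G₂.Adj x.1 y.1 ∧ s(x.1, y.1) ≠ s(v₃, v₄)

/-- `G` is a Hajós join of `G₁` and `G₂`. -/
def IsHajosJoin {W V₁ V₂ : Type*} (G : SimpleGraph W)
    (G₁ : SimpleGraph V₁) (G₂ : SimpleGraph V₂) : Prop :=
  ∃ (v₁ v₂ : V₁) (v₃ v₄ : V₂), G₁.Adj v₁ v₂ ∧ G₂.Adj v₃ v₄ ∧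
    Nonempty (G ≃g hajosJoin G₁ G₂ v₁ v₂ v₃ v₄)

/-- Vertices of the Petersen graph: 2-element subsets of a 5-element set. -/
abbrev KVert : Type := {s : Finset (Fin 5) // s.card = 2}

/-- The Petersen graph, as the Kneser graph K(5,2). -/
def Petersen : SimpleGraph KVert where
  Adj a b := Disjoint a.1 b.1
  symm := ⟨fun a b (h : Disjoint a.1 b.1) => h.symm⟩
  loopless := ⟨fun a (h : Disjoint a.1 a.1) => by
    have h2 := a.2
    have h' : (a.1 : Finset (Fin 5)) = ∅ := disjoint_self.mp h
    rw [h'] at h2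
    simp at h2⟩

/-- A fixed vertex of the Petersen graph. -/
def pstarV : KVert := ⟨{0, 1}, by decide⟩

/-- The vertex set of the Petersen graph minus one vertex. -/
abbrev PV : Type := {x : KVert // x ≠ pstarV}

/-- `P*`: the Petersen graph with one vertex deleted. -/
def PStar : SimpleGraph PV where
  Adj a b := Petersen.Adj a.1 b.1
  symm := ⟨fun _ _ h => Petersen.adj_symm h⟩
  loopless := ⟨fun a h => Petersen.irrefl (v := a.1) h⟩

namespace HJ
open scoped Classical

open SimpleGraph

variable {V : Type*} {n m : ℕ}

def Proper (G : SimpleGraph V) (C : Sym2 V → Fin n) : Prop :=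
  ∀ ⦃a b c : V⦄, G.Adj a b → G.Adj a c → b ≠ c → C s(a, b) ≠ C s(a, c)

lemma Proper.anti {G G' : SimpleGraph V} {C : Sym2 V → Fin n}
    (h : G' ≤ G) (hC : Proper G C) : Proper G' C :=
  fun _ _ _ h1 h2 hbc => hC (h h1) (h h2) hbc

lemma Proper.comp {G : SimpleGraph V} {C : Sym2 V → Fin n} (f : Fin n → Fin m)
    (hf : Function.Injective f) (hC : Proper G C) : Proper G (f ∘ C) :=
  fun _ _ _ h1 h2 hbc hfe => hC h1 h2 hbc (hf hfe)

def colAt (G : SimpleGraph V) (C : Sym2 V → Fin n) (v : V) : Set (Fin n) :=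
  {γ | ∃ b, G.Adj v b ∧ C s(v, b) = γ}

lemma colAt_comp {G : SimpleGraph V} {C : Sym2 V → Fin n} (f : Fin n → Fin m) (v : V) :
    colAt G (f ∘ C) v = f '' colAt G C v := by
  ext γ
  constructor
  · rintro ⟨b, hb, rfl⟩; exact ⟨C s(v, b), ⟨b, hb, rfl⟩, rfl⟩
  · rintro ⟨x, ⟨b, hb, rfl⟩, rfl⟩; exact ⟨b, hb, rfl⟩

lemma colAt_anti {G G' : SimpleGraph V} {C : Sym2 V → Fin n} (h : G' ≤ G) (v : V) :
    colAt G' C v ⊆ colAt G C v := by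
  rintro γ ⟨b, hb, rfl⟩; exact ⟨b, h hb, rfl⟩

lemma colAt_eq_image (G : SimpleGraph V) (C : Sym2 V → Fin n) (v : V) :
    colAt G C v = (fun b => C s(v, b)) '' (G.neighborSet v) := by
  ext γ
  constructor
  · rintro ⟨b, hb, rfl⟩; exact ⟨b, hb, rfl⟩
  · rintro ⟨b, hb, rfl⟩; exact ⟨b, hb, rfl⟩

lemma colAt_ncard_le [Fintype V] (G : SimpleGraph V) (C : Sym2 V → Fin n) (v : V) :
    (colAt G C v).ncard ≤ deg G v := by
  rw [colAt_eq_image]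
  exact Set.ncard_image_le (G.neighborSet v).toFinite

lemma exists_not_mem_of_ncard_lt {s : Set (Fin n)} (h : s.ncard < n) : ∃ γ, γ ∉ s := by
  by_contra hc
  push_neg at hc
  have : s = Set.univ := Set.eq_univ_of_forall hc
  rw [this, Set.ncard_univ, Nat.card_eq_fintype_card, Fintype.card_fin] at h
  omega

/-- extension of a coloring by one edge whose color is missing at both endpoints -/
lemma proper_extend {G : SimpleGraph V} {a b : V} (hab : G.Adj a b)
    {C : Sym2 V → Fin n} (hC : Proper (G.deleteEdges {s(a, b)}) C) (γ : Fin n)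
    (ha : γ ∉ colAt (G.deleteEdges {s(a, b)}) C a)
    (hb : γ ∉ colAt (G.deleteEdges {s(a, b)}) C b) :
    Proper G (fun p => if p = s(a, b) then γ else C p) := by
  set G' := G.deleteEdges {s(a, b)} with hG'
  intro x y z hxy hxz hyz
  by_cases h1 : s(x, y) = s(a, b) <;> by_cases h2 : s(x, z) = s(a, b)
  · exact absurd (h1.trans h2.symm) (fun h => hyz (Sym2.congr_right.mp h))
  · simp only [h1, if_pos, if_neg h2, if_true]
    have hxz' : G'.Adj x z := by
      rw [hG', SimpleGraph.deleteEdges_adj]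
      exact ⟨hxz, by simpa using h2⟩
    rcases Sym2.eq_iff.mp h1 with ⟨rfl, rfl⟩ | ⟨rfl, rfl⟩
    · exact fun h => ha ⟨z, hxz', h.symm⟩
    · exact fun h => hb ⟨z, hxz', h.symm⟩
  · simp only [h2, if_pos, if_neg h1, if_true]
    have hxy' : G'.Adj x y := by
      rw [hG', SimpleGraph.deleteEdges_adj]
      exact ⟨hxy, by simpa using h1⟩
    rcases Sym2.eq_iff.mp h2 with ⟨rfl, rfl⟩ | ⟨rfl, rfl⟩
    · exact fun h => ha ⟨y, hxy', h⟩
    · exact fun h => hb ⟨y, hxy', h⟩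
  · simp only [if_neg h1, if_neg h2]
    have hxy' : G'.Adj x y := by
      rw [hG', SimpleGraph.deleteEdges_adj]; exact ⟨hxy, by simpa using h1⟩
    have hxz' : G'.Adj x z := by
      rw [hG', SimpleGraph.deleteEdges_adj]; exact ⟨hxz, by simpa using h2⟩
    exact hC hxy' hxz' hyz


lemma ec_of_proper {G : SimpleGraph V} {C : Sym2 V → Fin n} (hC : Proper G C) :
    EdgeColorable G n := by
  refine ⟨fun e => C e.1, ?_⟩
  rintro ⟨e₁, he₁⟩ ⟨e₂, he₂⟩ hne ⟨v, hv₁, hv₂⟩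
  simp only [ne_eq, Subtype.mk.injEq] at hne ⊢
  obtain ⟨b, rfl⟩ := Sym2.mem_iff_exists.mp hv₁
  obtain ⟨c, rfl⟩ := Sym2.mem_iff_exists.mp hv₂
  exact hC ((SimpleGraph.mem_edgeSet _).mp he₁) ((SimpleGraph.mem_edgeSet _).mp he₂)
    (fun h => hne (by rw [h])) 

lemma proper_of_ec {G : SimpleGraph V} (hn : 0 < n) (h : EdgeColorable G n) :
    ∃ C : Sym2 V → Fin n, Proper G C := by
  obtain ⟨C₀, hC₀⟩ := h
  refine ⟨fun p => if h : p ∈ G.edgeSet then C₀ ⟨p, h⟩ else ⟨0, hn⟩, ?_⟩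
  intro a b c hab hac hbc
  have h1 : s(a, b) ∈ G.edgeSet := hab
  have h2 : s(a, c) ∈ G.edgeSet := hac
  simp only [dif_pos h1, dif_pos h2]
  refine hC₀ ⟨_, h1⟩ ⟨_, h2⟩ ?_ ⟨a, by simp, by simp⟩
  simp only [ne_eq, Subtype.mk.injEq]
  exact fun h => hbc (Sym2.congr_right.mp h)

lemma ec_mono {G : SimpleGraph V} (h : EdgeColorable G n) (hnm : n ≤ m) :
    EdgeColorable G m := by
  obtain ⟨C, hC⟩ := h
  exact ⟨fun e => Fin.castLE hnm (C e), fun e₁ e₂ hne hv h =>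
    hC e₁ e₂ hne hv (Fin.castLE_injective hnm h)⟩

lemma ec_del_succ {G : SimpleGraph V} {e : Sym2 V} (he : e ∈ G.edgeSet) (hn : 0 < n)
    (h : EdgeColorable (G.deleteEdges {e}) n) : EdgeColorable G (n + 1) := by
  induction e with
  | _ a b =>
  have hab : G.Adj a b := he
  obtain ⟨C, hC⟩ := proper_of_ec hn h
  have hC' : Proper (G.deleteEdges {s(a, b)}) ((Fin.castLE (Nat.le_succ n)) ∘ C) :=
    hC.comp _ (Fin.castLE_injective _)
  have hlast : ∀ v, (Fin.last n) ∉ colAt (G.deleteEdges {s(a, b)}) ((Fin.castLE (Nat.le_succ n)) ∘ C) v := by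
    rintro v ⟨c, hc, hcc⟩
    have h2 : ((Fin.castLE (Nat.le_succ n)) ∘ C) s(v, c) = Fin.castLE (Nat.le_succ n) (C s(v, c)) := rfl
    rw [h2] at hcc
    have h3 : (Fin.castLE (Nat.le_succ n) (C s(v, c)) : ℕ) = (C s(v, c) : ℕ) := rfl
    have h4 : (C s(v, c) : ℕ) < n := (C s(v, c)).is_lt
    rw [hcc] at h3
    simp [Fin.last] at h3
    omega
  exact ec_of_proper (proper_extend hab hC' (Fin.last n) (hlast a) (hlast b))

lemma chromIndex_eq {G : SimpleGraph V} {k : ℕ} (hk : EdgeColorable G (k + 1))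
    (hk' : ¬ EdgeColorable G k) : chromIndex G = k + 1 := by
  refine le_antisymm (Nat.sInf_le hk) ?_
  by_contra h
  push_neg at h
  have hmem : sInf {n | EdgeColorable G n} ∈ {n | EdgeColorable G n} :=
    Nat.sInf_mem ⟨k + 1, hk⟩
  have hS : sInf {n | EdgeColorable G n} = chromIndex G := rfl
  refine hk' (ec_mono hmem ?_)
  rw [hS]; omega

lemma ec_of_chromIndex {G : SimpleGraph V} {k N : ℕ} (h : chromIndex G = k)
    (hN : EdgeColorable G N) : EdgeColorable G k := by
  have h0 := Nat.sInf_mem (⟨N, hN⟩ : Set.Nonempty {n | EdgeColorable G n})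
  have h1 : sInf {n | EdgeColorable G n} = k := h
  rwa [h1] at h0

lemma not_ec_of_chromIndex {G : SimpleGraph V} {k j : ℕ} (h : chromIndex G = k)
    (hj : j < k) : ¬ EdgeColorable G j := by
  intro hc
  have h2 : sInf {n | EdgeColorable G n} ≤ j := Nat.sInf_le hc
  have h1 : sInf {n | EdgeColorable G n} = k := h
  omega

-- degree lemmas
lemma deg_anti [Fintype V] {G G' : SimpleGraph V} (h : G' ≤ G) (v : V) :
    deg G' v ≤ deg G v :=
  Set.ncard_le_ncard (fun _ hb => h hb) (G.neighborSet v).toFinite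

lemma deg_del_lt_left [Fintype V] {G : SimpleGraph V} {a b : V} (hab : G.Adj a b) :
    deg (G.deleteEdges {s(a, b)}) a < deg G a := by
  apply Set.ncard_lt_ncard _ (G.neighborSet a).toFinite
  constructor
  · intro c hc
    exact ((SimpleGraph.deleteEdges_adj).mp hc).1
  · intro hsub
    have hb : b ∈ G.neighborSet a := hab
    have := hsub hb
    simp only [SimpleGraph.mem_neighborSet, SimpleGraph.deleteEdges_adj] at this
    exact this.2 (by simp)

lemma deg_del_lt_right [Fintype V] {G : SimpleGraph V} {a b : V} (hab : G.Adj a b) :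
    deg (G.deleteEdges {s(a, b)}) b < deg G b := by
  have : ({s(a, b)} : Set (Sym2 V)) = {s(b, a)} := by rw [Sym2.eq_swap]
  rw [this]
  exact deg_del_lt_left hab.symm


lemma edgeSet_exists_rep {G : SimpleGraph V} {e : Sym2 V} (he : e ∈ G.edgeSet) :
    ∃ a b, G.Adj a b ∧ e = s(a, b) := by
  induction e with
  | _ a b => exact ⟨a, b, he, rfl⟩

lemma greedy_aux [Fintype V] (k : ℕ) (hn : 2 * k ≤ n + 1) (hn0 : 0 < n) :
    ∀ (m : ℕ) (G : SimpleGraph V), G.edgeSet.ncard ≤ m → (∀ v, deg G v ≤ k) →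
    ∃ C : Sym2 V → Fin n, Proper G C := by
  intro m
  induction m with
  | zero =>
    intro G hcard _
    have hempty : G.edgeSet = ∅ := by
      rw [← Set.ncard_eq_zero G.edgeSet.toFinite]; omega
    refine ⟨fun _ => ⟨0, hn0⟩, fun a b c hab _ _ => ?_⟩
    have : s(a,b) ∈ G.edgeSet := hab
    rw [hempty] at this
    exact absurd this (Set.notMem_empty _)
  | succ m ih =>
    intro G hcard hdeg
    rcases Set.eq_empty_or_nonempty G.edgeSet with hempty | ⟨e, he⟩
    · refine ⟨fun _ => ⟨0, hn0⟩, fun a b c hab _ _ => ?_⟩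
      have : s(a,b) ∈ G.edgeSet := hab
      rw [hempty] at this
      exact absurd this (Set.notMem_empty _)
    · obtain ⟨a, b, hab, rfl⟩ := edgeSet_exists_rep he
      set G' := G.deleteEdges {s(a, b)} with hG'
      have hcard' : G'.edgeSet.ncard ≤ m := by
        rw [hG', SimpleGraph.edgeSet_deleteEdges]
        have : (G.edgeSet \ {s(a, b)}).ncard = G.edgeSet.ncard - 1 := by
          rw [Set.ncard_diff_singleton_of_mem he]
        omega
      have hdeg' : ∀ v, deg G' v ≤ k := fun v =>
        le_trans (deg_anti (SimpleGraph.deleteEdges_le _) v) (hdeg v)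
      obtain ⟨C, hC⟩ := ih G' hcard' hdeg'
      have hA : (colAt G' C a).ncard < k := by
        calc (colAt G' C a).ncard ≤ deg G' a := colAt_ncard_le G' C a
        _ < deg G a := deg_del_lt_left hab
        _ ≤ k := hdeg a
      have hB : (colAt G' C b).ncard < k := by
        calc (colAt G' C b).ncard ≤ deg G' b := colAt_ncard_le G' C b
        _ < deg G b := deg_del_lt_right hab
        _ ≤ k := hdeg b
      have hU : (colAt G' C a ∪ colAt G' C b).ncard < n := by
        have := Set.ncard_union_le (colAt G' C a) (colAt G' C b)
        omega
      obtain ⟨γ, hγ⟩ := exists_not_mem_of_ncard_lt hU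
      refine ⟨_, proper_extend hab hC γ ?_ ?_⟩
      · exact fun h => hγ (Set.mem_union_left _ h)
      · exact fun h => hγ (Set.mem_union_right _ h)

lemma greedy [Fintype V] {G : SimpleGraph V} (k : ℕ) (hdeg : ∀ v, deg G v ≤ k)
    (hn : 2 * k ≤ n + 1) (hn0 : 0 < n) : ∃ C : Sym2 V → Fin n, Proper G C :=
  greedy_aux k hn hn0 G.edgeSet.ncard G le_rfl hdeg

lemma ec_five [Fintype V] {G : SimpleGraph V} (hdeg : ∀ v, deg G v ≤ 3) :
    EdgeColorable G 5 :=
  ec_of_proper (greedy 3 hdeg (by omega) (by omega)).choose_spec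

lemma ec_three_of_deg_two [Fintype V] {G : SimpleGraph V} (hdeg : ∀ v, deg G v ≤ 2) :
    EdgeColorable G 3 :=
  ec_of_proper (greedy 2 hdeg (by omega) (by omega)).choose_spec

/-- existence of a max-degree vertex from non-3-colorability -/
lemma exists_deg_three [Fintype V] {G : SimpleGraph V} (hdeg : ∀ v, deg G v ≤ 3)
    (h : ¬ EdgeColorable G 3) : ∃ v, deg G v = 3 := by
  by_contra hc
  push_neg at hc
  exact h (ec_three_of_deg_two (fun v => by have h1 := hdeg v; have h2 := hc v; omega))


section Iso
variable {W : Type*}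

lemma iso_ec {G : SimpleGraph V} {H : SimpleGraph W} (φ : G ≃g H) (n : ℕ)
    (h : EdgeColorable H n) : EdgeColorable G n := by
  obtain ⟨C, hC⟩ := h
  refine ⟨fun e => C ⟨Sym2.map φ e.1, ?_⟩, ?_⟩
  · obtain ⟨a, b, hab, he⟩ := edgeSet_exists_rep e.2
    rw [he, Sym2.map_pair_eq]
    exact φ.map_adj_iff.mpr hab
  · rintro ⟨e₁, he₁⟩ ⟨e₂, he₂⟩ hne ⟨v, hv₁, hv₂⟩
    apply hC
    · simp only [ne_eq, Subtype.mk.injEq] at hne ⊢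
      exact fun h => hne (Sym2.map.injective φ.injective h)
    · exact ⟨φ v, Sym2.mem_map.mpr ⟨v, hv₁, rfl⟩, Sym2.mem_map.mpr ⟨v, hv₂, rfl⟩⟩

lemma iso_deg [Fintype V] [Fintype W] {G : SimpleGraph V} {H : SimpleGraph W}
    (φ : G ≃g H) (v : V) : deg G v = deg H (φ v) := by
  have himg : H.neighborSet (φ v) = φ '' (G.neighborSet v) := by
    ext w
    simp only [SimpleGraph.mem_neighborSet, Set.mem_image]
    constructor
    · intro h
      refine ⟨φ.symm w, ?_, by simp⟩
      have := φ.symm.map_adj_iff.mpr h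
      simpa using this
    · rintro ⟨u, hu, rfl⟩
      exact φ.map_adj_iff.mpr hu
  rw [deg, deg, himg, Set.ncard_image_of_injective _ φ.injective]

lemma iso_del {G : SimpleGraph V} {H : SimpleGraph W} (φ : G ≃g H) (e : Sym2 V) :
    Nonempty ((G.deleteEdges {e}) ≃g (H.deleteEdges {Sym2.map φ e})) := by
  refine ⟨⟨φ.toEquiv, ?_⟩⟩
  intro a b
  show (H.deleteEdges _).Adj (φ a) (φ b) ↔ (G.deleteEdges _).Adj a b
  simp only [SimpleGraph.deleteEdges_adj, Set.mem_singleton_iff]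
  constructor
  · rintro ⟨h1, h2⟩
    refine ⟨φ.map_adj_iff.mp h1, ?_⟩
    rintro rfl
    exact h2 (by rw [Sym2.map_pair_eq])
  · rintro ⟨h1, h2⟩
    refine ⟨φ.map_adj_iff.mpr h1, ?_⟩
    intro hc
    have heq : s(φ a, φ b) = Sym2.map φ s(a, b) := by rw [Sym2.map_pair_eq]
    rw [heq] at hc
    exact h2 (Sym2.map.injective φ.injective hc)

lemma iso_chromIndex {G : SimpleGraph V} {H : SimpleGraph W} (φ : G ≃g H) :
    chromIndex G = chromIndex H := by
  have : {n | EdgeColorable G n} = {n | EdgeColorable H n} := by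
    ext n
    exact ⟨fun h => iso_ec φ.symm n h, fun h => iso_ec φ n h⟩
  rw [chromIndex, chromIndex, this]

lemma iso_critical_mp {V' W' : Type*} [Fintype V'] [Fintype W'] {G' : SimpleGraph V'}
    {H' : SimpleGraph W'} (ψ : G' ≃g H') (k : ℕ) :
    IsCritical k G' → IsCritical k H' := by
    rintro ⟨h1, ⟨v, hv⟩, h3, h4⟩
    refine ⟨fun w => ?_, ⟨ψ v, by rw [← iso_deg ψ v]; exact hv⟩, ?_, ?_⟩
    · have := h1 (ψ.symm w)
      rwa [iso_deg ψ (ψ.symm w), (by simp : ψ (ψ.symm w) = w)] at this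
    · rw [← iso_chromIndex ψ]; exact h3
    · intro e he
      have he' : Sym2.map ψ.symm e ∈ G'.edgeSet := by
        obtain ⟨a, b, hab, rfl⟩ := edgeSet_exists_rep he
        rw [Sym2.map_pair_eq]
        exact ψ.symm.map_adj_iff.mpr hab
      have h5 := h4 _ he'
      obtain ⟨ψ'⟩ := iso_del ψ (Sym2.map ψ.symm e)
      rw [iso_chromIndex ψ'] at h5
      have : Sym2.map ψ (Sym2.map ψ.symm e) = e := by
        rw [Sym2.map_map]
        have : (ψ : V' → W') ∘ (ψ.symm : W' → V') = id := by
          funext x; simp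
        rw [this, Sym2.map_id]
        rfl
      rwa [this] at h5
lemma iso_critical [Fintype V] [Fintype W] {G : SimpleGraph V} {H : SimpleGraph W}
    (φ : G ≃g H) (k : ℕ) : IsCritical k G ↔ IsCritical k H :=
  ⟨fun h => iso_critical_mp φ k h, fun h => iso_critical_mp φ.symm k h⟩

end Iso


section Glue
open Sum

variable {V₁ V₂ : Type*}

def glueG (v₁ v₂ : V₁) (v₃ v₄ : V₂) (HL : SimpleGraph V₁) (HR : SimpleGraph V₂) (ε : Prop) :
    SimpleGraph (V₁ ⊕ {x : V₂ // x ≠ v₃}) :=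
  SimpleGraph.fromRel fun a b =>
    match a, b with
    | Sum.inl x, Sum.inl y => HL.Adj x y
    | Sum.inl x, Sum.inr y => (x = v₁ ∧ HR.Adj v₃ y.1) ∨ (ε ∧ x = v₂ ∧ y.1 = v₄)
    | Sum.inr _, Sum.inl _ => False
    | Sum.inr x, Sum.inr y => HR.Adj x.1 y.1

variable {v₁ v₂ : V₁} {v₃ v₄ : V₂} {HL : SimpleGraph V₁} {HR : SimpleGraph V₂} {ε : Prop}

lemma glueG_adj_ll {x y : V₁} :
    (glueG v₁ v₂ v₃ v₄ HL HR ε).Adj (inl x) (inl y) ↔ HL.Adj x y := by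
  rw [glueG, SimpleGraph.fromRel_adj]
  constructor
  · rintro ⟨hne, h | h⟩
    · exact h
    · exact h.symm
  · intro h
    exact ⟨fun hc => h.ne (by injection hc), Or.inl h⟩

lemma glueG_adj_lr {x : V₁} {y : {z : V₂ // z ≠ v₃}} :
    (glueG v₁ v₂ v₃ v₄ HL HR ε).Adj (inl x) (inr y) ↔
      (x = v₁ ∧ HR.Adj v₃ y.1) ∨ (ε ∧ x = v₂ ∧ y.1 = v₄) := by
  rw [glueG, SimpleGraph.fromRel_adj]
  constructor
  · rintro ⟨hne, h | h⟩
    · exact h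
    · exact h.elim
  · intro h
    exact ⟨fun hc => by injection hc, Or.inl h⟩

lemma glueG_adj_rl {x : V₁} {y : {z : V₂ // z ≠ v₃}} :
    (glueG v₁ v₂ v₃ v₄ HL HR ε).Adj (inr y) (inl x) ↔
      (x = v₁ ∧ HR.Adj v₃ y.1) ∨ (ε ∧ x = v₂ ∧ y.1 = v₄) := by
  rw [SimpleGraph.adj_comm]
  exact glueG_adj_lr

lemma glueG_adj_rr {x y : {z : V₂ // z ≠ v₃}} :
    (glueG v₁ v₂ v₃ v₄ HL HR ε).Adj (inr x) (inr y) ↔ HR.Adj x.1 y.1 := by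
  rw [glueG, SimpleGraph.fromRel_adj]
  constructor
  · rintro ⟨hne, h | h⟩
    · exact h
    · exact h.symm
  · intro h
    refine ⟨fun hc => h.ne ?_, Or.inl h⟩
    injection hc with hc'
    exact congrArg Subtype.val hc'

lemma glueG_anti {HL' : SimpleGraph V₁} {HR' : SimpleGraph V₂} (hL : HL' ≤ HL) (hR : HR' ≤ HR)
    {ε' : Prop} (hε : ε' → ε) :
    glueG v₁ v₂ v₃ v₄ HL' HR' ε' ≤ glueG v₁ v₂ v₃ v₄ HL HR ε := by
  intro a b
  cases a with
  | inl x => cases b with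
    | inl y =>
      rw [glueG_adj_ll, glueG_adj_ll]
      exact fun h => hL h
    | inr y =>
      rw [glueG_adj_lr, glueG_adj_lr]
      rintro (⟨h1, h2⟩ | ⟨h1, h2⟩)
      · exact Or.inl ⟨h1, hR h2⟩
      · exact Or.inr ⟨hε h1, h2⟩
  | inr x => cases b with
    | inl y =>
      rw [glueG_adj_rl, glueG_adj_rl]
      rintro (⟨h1, h2⟩ | ⟨h1, h2⟩)
      · exact Or.inl ⟨h1, hR h2⟩
      · exact Or.inr ⟨hε h1, h2⟩
    | inr y =>
      rw [glueG_adj_rr, glueG_adj_rr]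
      exact fun h => hR h

lemma hajosJoin_eq (G₁ : SimpleGraph V₁) (G₂ : SimpleGraph V₂) (h34 : G₂.Adj v₃ v₄) :
    hajosJoin G₁ G₂ v₁ v₂ v₃ v₄ =
      glueG v₁ v₂ v₃ v₄ (G₁.deleteEdges {s(v₁, v₂)}) (G₂.deleteEdges {s(v₃, v₄)}) True := by
  ext a b
  cases a with
  | inl x => cases b with
    | inl y =>
      rw [glueG_adj_ll, hajosJoin, SimpleGraph.fromRel_adj, SimpleGraph.deleteEdges_adj]
      constructor
      · rintro ⟨hne, ⟨h1, h2⟩ | ⟨h1, h2⟩⟩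
        · exact ⟨h1, by simpa using h2⟩
        · exact ⟨h1.symm, by simpa [Sym2.eq_swap (a := y) (b := x)] using h2⟩
      · rintro ⟨h1, h2⟩
        exact ⟨fun hc => h1.ne (by injection hc), Or.inl ⟨h1, by simpa using h2⟩⟩
    | inr y =>
      rw [glueG_adj_lr, hajosJoin, SimpleGraph.fromRel_adj, SimpleGraph.deleteEdges_adj]
      constructor
      · rintro ⟨hne, (⟨h1, h2, h3⟩ | h) | h⟩
        · refine Or.inl ⟨h1, h2, ?_⟩
          simp only [Set.mem_singleton_iff]
          exact fun hc => h3 (Sym2.congr_right.mp hc)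
        · exact Or.inr ⟨trivial, h⟩
        · exact h.elim
      · rintro (⟨h1, h2, h3⟩ | ⟨_, h⟩)
        · refine ⟨fun hc => by injection hc, Or.inl (Or.inl ⟨h1, h2, ?_⟩)⟩
          intro hc
          exact (by simpa using h3 : s(v₃, y.1) ≠ s(v₃, v₄)) (Sym2.congr_right.mpr hc)
        · exact ⟨fun hc => by injection hc, Or.inl (Or.inr h)⟩
  | inr x => cases b with
    | inl y =>
      rw [glueG_adj_rl, hajosJoin, SimpleGraph.fromRel_adj, SimpleGraph.deleteEdges_adj]
      constructor
      · rintro ⟨hne, h | (⟨h1, h2, h3⟩ | h)⟩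
        · exact h.elim
        · refine Or.inl ⟨h1, h2, ?_⟩
          simp only [Set.mem_singleton_iff]
          exact fun hc => h3 (Sym2.congr_right.mp hc)
        · exact Or.inr ⟨trivial, h⟩
      · rintro (⟨h1, h2, h3⟩ | ⟨_, h⟩)
        · refine ⟨fun hc => by injection hc, Or.inr (Or.inl ⟨h1, h2, ?_⟩)⟩
          intro hc
          exact (by simpa using h3 : s(v₃, x.1) ≠ s(v₃, v₄)) (Sym2.congr_right.mpr hc)
        · exact ⟨fun hc => by injection hc, Or.inr (Or.inr h)⟩
    | inr y =>
      rw [glueG_adj_rr, hajosJoin, SimpleGraph.fromRel_adj, SimpleGraph.deleteEdges_adj]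
      constructor
      · rintro ⟨hne, ⟨h1, h2⟩ | ⟨h1, h2⟩⟩
        · exact ⟨h1, by simpa using h2⟩
        · exact ⟨h1.symm, by simpa [Sym2.eq_swap (a := y.1) (b := x.1)] using h2⟩
      · rintro ⟨h1, h2⟩
        refine ⟨fun hc => h1.ne ?_, Or.inl ⟨h1, by simpa using h2⟩⟩
        injection hc with hc'
        exact congrArg Subtype.val hc'


noncomputable def j₂ (v₁ : V₁) (v₃ : V₂) : V₂ → V₁ ⊕ {x : V₂ // x ≠ v₃} :=
  fun x => if h : x = v₃ then inl v₁ else inr ⟨x, h⟩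

lemma j₂_v₃ : j₂ v₁ v₃ v₃ = inl v₁ := by simp [j₂]

lemma j₂_ne {x : V₂} (h : x ≠ v₃) : j₂ v₁ v₃ x = inr ⟨x, h⟩ := by simp [j₂, h]

lemma j₂_injective : Function.Injective (j₂ v₁ v₃ : V₂ → V₁ ⊕ {x : V₂ // x ≠ v₃}) := by
  intro a b hab
  by_cases ha : a = v₃ <;> by_cases hb : b = v₃
  · rw [ha, hb]
  · rw [ha, j₂_v₃, j₂_ne hb] at hab; exact absurd hab (by simp)
  · rw [hb, j₂_v₃, j₂_ne ha] at hab; exact absurd hab (by simp)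
  · rw [j₂_ne ha, j₂_ne hb] at hab
    injection hab with h
    exact congrArg Subtype.val h

lemma del_inl (f : Sym2 V₁) :
    (glueG v₁ v₂ v₃ v₄ HL HR ε).deleteEdges {Sym2.map inl f} =
      glueG v₁ v₂ v₃ v₄ (HL.deleteEdges {f}) HR ε := by
  have hmixed : ∀ (x : V₁) (y : {z : V₂ // z ≠ v₃}), s(inl x, inr y) ≠ Sym2.map inl f := by
    intro x y hc
    induction f with
    | _ c d =>
      rw [Sym2.map_pair_eq] at hc
      rcases Sym2.eq_iff.mp hc with ⟨_, h⟩ | ⟨_, h⟩ <;> exact absurd h (by simp)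
  ext a b
  cases a with
  | inl x => cases b with
    | inl y =>
      rw [SimpleGraph.deleteEdges_adj, glueG_adj_ll, glueG_adj_ll, SimpleGraph.deleteEdges_adj]
      simp only [Set.mem_singleton_iff]
      have : s(inl x, inl y) = Sym2.map (inl : V₁ → V₁ ⊕ {z : V₂ // z ≠ v₃}) s(x, y) := by
        rw [Sym2.map_pair_eq]
      rw [this]
      constructor
      · rintro ⟨h1, h2⟩
        exact ⟨h1, fun hc => h2 (by rw [hc])⟩
      · rintro ⟨h1, h2⟩
        exact ⟨h1, fun hc => h2 (Sym2.map.injective (fun _ _ h => by injection h) hc)⟩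
    | inr y =>
      rw [SimpleGraph.deleteEdges_adj, glueG_adj_lr, glueG_adj_lr]
      simp only [Set.mem_singleton_iff]
      exact ⟨fun h => h.1, fun h => ⟨h, hmixed x y⟩⟩
  | inr x => cases b with
    | inl y =>
      rw [SimpleGraph.deleteEdges_adj, glueG_adj_rl, glueG_adj_rl]
      simp only [Set.mem_singleton_iff]
      refine ⟨fun h => h.1, fun h => ⟨h, ?_⟩⟩
      rw [Sym2.eq_swap]
      exact hmixed y x
    | inr y =>
      rw [SimpleGraph.deleteEdges_adj, glueG_adj_rr, glueG_adj_rr]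
      simp only [Set.mem_singleton_iff]
      refine ⟨fun h => h.1, fun h => ⟨h, ?_⟩⟩
      intro hc
      induction f with
      | _ c d =>
        rw [Sym2.map_pair_eq] at hc
        rcases Sym2.eq_iff.mp hc with ⟨h', _⟩ | ⟨_, h'⟩ <;> exact absurd h' (by simp)

lemma del_j₂ (h12 : v₁ ≠ v₂) (f : Sym2 V₂) (hf : ¬ f.IsDiag) :
    (glueG v₁ v₂ v₃ v₄ HL HR ε).deleteEdges {Sym2.map (j₂ v₁ v₃) f} =
      glueG v₁ v₂ v₃ v₄ HL (HR.deleteEdges {f}) ε := by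
  -- characterize when various edges equal the mapped edge
  have hll : ∀ (x y : V₁), s(inl x, inl y) ≠ Sym2.map (j₂ v₁ v₃) f := by
    intro x y hc
    induction f with
    | _ c d =>
      rw [Sym2.map_pair_eq] at hc
      by_cases hcv : c = v₃ <;> by_cases hdv : d = v₃
      · exact hf (by rw [hcv, hdv]; simp)
      · rw [hcv, j₂_v₃, j₂_ne hdv] at hc
        rcases Sym2.eq_iff.mp hc with ⟨_, h⟩ | ⟨h, _⟩ <;> exact absurd h (by simp)
      · rw [hdv, j₂_v₃, j₂_ne hcv] at hc
        rcases Sym2.eq_iff.mp hc with ⟨h, _⟩ | ⟨_, h⟩ <;> exact absurd h (by simp)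
      · rw [j₂_ne hcv, j₂_ne hdv] at hc
        rcases Sym2.eq_iff.mp hc with ⟨h, _⟩ | ⟨_, h⟩ <;> exact absurd h (by simp)
  have hmx : ∀ (x : V₁) (y : {z : V₂ // z ≠ v₃}),
      (s(inl x, inr y) = Sym2.map (j₂ v₁ v₃) f) ↔ (x = v₁ ∧ f = s(v₃, y.1)) := by
    intro x y
    constructor
    · intro hc
      induction f with
      | _ c d =>
        rw [Sym2.map_pair_eq] at hc
        by_cases hcv : c = v₃ <;> by_cases hdv : d = v₃
        · exact absurd (by rw [hcv, hdv]; simp) hf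
        · rw [hcv, j₂_v₃, j₂_ne hdv] at hc
          rcases Sym2.eq_iff.mp hc with ⟨h1, h2⟩ | ⟨h1, h2⟩
          · injection h1 with h1'
            injection h2 with h2'
            refine ⟨h1', ?_⟩
            subst h2'
            rw [hcv]
          · exact absurd h1 (by simp)
        · rw [hdv, j₂_v₃, j₂_ne hcv] at hc
          rcases Sym2.eq_iff.mp hc with ⟨h1, h2⟩ | ⟨h1, h2⟩
          · exact absurd h2 (by simp)
          · injection h1 with h1'
            injection h2 with h2'
            refine ⟨h1', ?_⟩
            subst h2'
            rw [hdv, Sym2.eq_swap]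
        · rw [j₂_ne hcv, j₂_ne hdv] at hc
          rcases Sym2.eq_iff.mp hc with ⟨h1, _⟩ | ⟨h1, _⟩ <;> exact absurd h1 (by simp)
    · rintro ⟨rfl, rfl⟩
      rw [Sym2.map_pair_eq, j₂_v₃, j₂_ne y.2]
  have hrr : ∀ (x y : {z : V₂ // z ≠ v₃}),
      (s(inr x, inr y) : Sym2 (V₁ ⊕ {z : V₂ // z ≠ v₃})) = Sym2.map (j₂ v₁ v₃) f ↔
        f = s(x.1, y.1) := by
    intro x y
    constructor
    · intro hc
      induction f with
      | _ c d =>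
        rw [Sym2.map_pair_eq] at hc
        by_cases hcv : c = v₃ <;> by_cases hdv : d = v₃
        · exact absurd (by rw [hcv, hdv]; simp) hf
        · rw [hcv, j₂_v₃, j₂_ne hdv] at hc
          rcases Sym2.eq_iff.mp hc with ⟨h1, _⟩ | ⟨_, h1⟩ <;> exact absurd h1.symm (by simp)
        · rw [hdv, j₂_v₃, j₂_ne hcv] at hc
          rcases Sym2.eq_iff.mp hc with ⟨_, h1⟩ | ⟨h1, _⟩ <;> exact absurd h1.symm (by simp)
        · rw [j₂_ne hcv, j₂_ne hdv] at hc
          rcases Sym2.eq_iff.mp hc with ⟨h1, h2⟩ | ⟨h1, h2⟩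
          · injection h1 with h1'
            subst h1'
            injection h2 with h2'
            subst h2'
            rfl
          · injection h1 with h1'
            subst h1'
            injection h2 with h2'
            subst h2'
            rw [Sym2.eq_swap]
    · rintro rfl
      rw [Sym2.map_pair_eq, j₂_ne x.2, j₂_ne y.2]
  ext a b
  cases a with
  | inl x => cases b with
    | inl y =>
      rw [SimpleGraph.deleteEdges_adj, glueG_adj_ll, glueG_adj_ll]
      simp only [Set.mem_singleton_iff]
      exact ⟨fun h => h.1, fun h => ⟨h, hll x y⟩⟩
    | inr y =>
      rw [SimpleGraph.deleteEdges_adj, glueG_adj_lr, glueG_adj_lr, SimpleGraph.deleteEdges_adj]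
      simp only [Set.mem_singleton_iff, hmx]
      constructor
      · rintro ⟨⟨h1, h2⟩ | ⟨h1, h2, h3⟩, h4⟩
        · exact Or.inl ⟨h1, h2, fun hc => h4 ⟨h1, hc.symm⟩⟩
        · exact Or.inr ⟨h1, h2, h3⟩
      · rintro (⟨h1, h2, h3⟩ | ⟨h1, h2, h3⟩)
        · exact ⟨Or.inl ⟨h1, h2⟩, fun hc => h3 hc.2.symm⟩
        · refine ⟨Or.inr ⟨h1, h2, h3⟩, fun hc => h12 ?_⟩
          rw [← h2, ← hc.1]
  | inr x => cases b with
    | inl y =>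
      rw [SimpleGraph.deleteEdges_adj, glueG_adj_rl, glueG_adj_rl, SimpleGraph.deleteEdges_adj]
      simp only [Set.mem_singleton_iff]
      rw [Sym2.eq_swap, hmx]
      constructor
      · rintro ⟨⟨h1, h2⟩ | ⟨h1, h2, h3⟩, h4⟩
        · exact Or.inl ⟨h1, h2, fun hc => h4 ⟨h1, hc.symm⟩⟩
        · exact Or.inr ⟨h1, h2, h3⟩
      · rintro (⟨h1, h2, h3⟩ | ⟨h1, h2, h3⟩)
        · exact ⟨Or.inl ⟨h1, h2⟩, fun hc => h3 hc.2.symm⟩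
        · refine ⟨Or.inr ⟨h1, h2, h3⟩, fun hc => h12 ?_⟩
          rw [← h2, ← hc.1]
    | inr y =>
      rw [SimpleGraph.deleteEdges_adj, glueG_adj_rr, glueG_adj_rr, SimpleGraph.deleteEdges_adj]
      simp only [Set.mem_singleton_iff, hrr]
      constructor
      · rintro ⟨h1, h2⟩
        exact ⟨h1, fun hc => h2 hc.symm⟩
      · rintro ⟨h1, h2⟩
        exact ⟨h1, fun hc => h2 hc.symm⟩

lemma del_special (h12 : v₁ ≠ v₂) (hy₄ : (v₄ : V₂) ≠ v₃) :
    (glueG v₁ v₂ v₃ v₄ HL HR True).deleteEdges {s(inl v₂, inr ⟨v₄, hy₄⟩)} =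
      glueG v₁ v₂ v₃ v₄ HL HR False := by
  ext a b
  cases a with
  | inl x => cases b with
    | inl y =>
      rw [SimpleGraph.deleteEdges_adj, glueG_adj_ll, glueG_adj_ll]
      simp only [Set.mem_singleton_iff]
      refine ⟨fun h => h.1, fun h => ⟨h, ?_⟩⟩
      intro hc
      rcases Sym2.eq_iff.mp hc with ⟨_, h'⟩ | ⟨h', _⟩ <;> exact absurd h' (by simp)
    | inr y =>
      rw [SimpleGraph.deleteEdges_adj, glueG_adj_lr, glueG_adj_lr]
      simp only [Set.mem_singleton_iff]
      constructor
      · rintro ⟨⟨h1, h2⟩ | ⟨_, h2, h3⟩, h4⟩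
        · exact Or.inl ⟨h1, h2⟩
        · exfalso
          apply h4
          rw [h2]
          have : y = ⟨v₄, hy₄⟩ := Subtype.ext h3
          rw [this]
      · rintro (⟨h1, h2⟩ | ⟨hf, _, _⟩)
        · refine ⟨Or.inl ⟨h1, h2⟩, ?_⟩
          intro hc
          rcases Sym2.eq_iff.mp hc with ⟨h', _⟩ | ⟨_, h'⟩
          · rw [h1] at h'
            injection h' with h''
            exact h12 h''
          · exact absurd h' (by simp)
        · exact hf.elim
  | inr x => cases b with
    | inl y =>
      rw [SimpleGraph.deleteEdges_adj, glueG_adj_rl, glueG_adj_rl]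
      simp only [Set.mem_singleton_iff]
      constructor
      · rintro ⟨⟨h1, h2⟩ | ⟨_, h2, h3⟩, h4⟩
        · exact Or.inl ⟨h1, h2⟩
        · exfalso
          apply h4
          rw [h2]
          have : x = ⟨v₄, hy₄⟩ := Subtype.ext h3
          rw [this, Sym2.eq_swap]
      · rintro (⟨h1, h2⟩ | ⟨hf, _, _⟩)
        · refine ⟨Or.inl ⟨h1, h2⟩, ?_⟩
          intro hc
          rcases Sym2.eq_iff.mp hc with ⟨h', _⟩ | ⟨_, h'⟩
          · exact absurd h' (by simp)
          · rw [h1] at h'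
            injection h' with h''
            exact h12 h''
        · exact hf.elim
    | inr y =>
      rw [SimpleGraph.deleteEdges_adj, glueG_adj_rr, glueG_adj_rr]
      simp only [Set.mem_singleton_iff]
      refine ⟨fun h => h.1, fun h => ⟨h, ?_⟩⟩
      intro hc
      rcases Sym2.eq_iff.mp hc with ⟨h', _⟩ | ⟨_, h'⟩ <;> exact absurd h' (by simp)


noncomputable def glueC (v₁ : V₁) (v₃ : V₂) (cL : Sym2 V₁ → Fin 3) (cR : Sym2 V₂ → Fin 3)
    (δ : Fin 3) : Sym2 (V₁ ⊕ {x : V₂ // x ≠ v₃}) → Fin 3 :=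
  Sym2.lift ⟨fun a b =>
    match a, b with
    | Sum.inl x, Sum.inl y => cL s(x, y)
    | Sum.inl x, Sum.inr y => if x = v₁ then cR s(v₃, y.1) else δ
    | Sum.inr y, Sum.inl x => if x = v₁ then cR s(v₃, y.1) else δ
    | Sum.inr x, Sum.inr y => cR s(x.1, y.1), by
      intro a b
      cases a <;> cases b <;> simp only []
      · rw [Sym2.eq_swap]
      · rw [Sym2.eq_swap]⟩

lemma glueC_ll {cL : Sym2 V₁ → Fin 3} {cR : Sym2 V₂ → Fin 3} {δ : Fin 3} (x y : V₁) :
    glueC v₁ v₃ cL cR δ s(inl x, inl y) = cL s(x, y) := rfl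

lemma glueC_lr {cL : Sym2 V₁ → Fin 3} {cR : Sym2 V₂ → Fin 3} {δ : Fin 3} (x : V₁)
    (y : {z : V₂ // z ≠ v₃}) :
    glueC v₁ v₃ cL cR δ s(inl x, inr y) = if x = v₁ then cR s(v₃, y.1) else δ := rfl

lemma glueC_rl {cL : Sym2 V₁ → Fin 3} {cR : Sym2 V₂ → Fin 3} {δ : Fin 3} (x : V₁)
    (y : {z : V₂ // z ≠ v₃}) :
    glueC v₁ v₃ cL cR δ s(inr y, inl x) = if x = v₁ then cR s(v₃, y.1) else δ := rfl

lemma glueC_rr {cL : Sym2 V₁ → Fin 3} {cR : Sym2 V₂ → Fin 3} {δ : Fin 3}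
    (x y : {z : V₂ // z ≠ v₃}) :
    glueC v₁ v₃ cL cR δ s(inr x, inr y) = cR s(x.1, y.1) := rfl

lemma glue_proper {cL : Sym2 V₁ → Fin 3} {cR : Sym2 V₂ → Fin 3} {δ : Fin 3}
    (h12 : v₁ ≠ v₂) (hR34 : ¬ HR.Adj v₃ v₄)
    (hcL : Proper HL cL) (hcR : Proper HR cR)
    (hdisj : ∀ γ, γ ∈ colAt HL cL v₁ → γ ∉ colAt HR cR v₃)
    (hδ₂ : ε → δ ∉ colAt HL cL v₂) (hδ₄ : ε → δ ∉ colAt HR cR v₄) :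
    Proper (glueG v₁ v₂ v₃ v₄ HL HR ε) (glueC v₁ v₃ cL cR δ) := by
  intro a b c hab hac hbc
  cases a with
  | inl p =>
    cases b with
    | inl q =>
      rw [glueG_adj_ll] at hab
      cases c with
      | inl r =>
        rw [glueG_adj_ll] at hac
        rw [glueC_ll, glueC_ll]
        exact hcL hab hac (fun h => hbc (by rw [h]))
      | inr r =>
        rw [glueG_adj_lr] at hac
        rw [glueC_ll, glueC_lr]
        rcases hac with ⟨rfl, hr⟩ | ⟨hε, rfl, hr⟩
        · rw [if_pos rfl]
          intro hc
          exact hdisj _ ⟨q, hab, rfl⟩ ⟨r.1, hr, hc.symm⟩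
        · rw [if_neg (fun h => h12 h.symm)]
          intro hc
          exact hδ₂ hε ⟨q, hab, hc⟩
    | inr q =>
      rw [glueG_adj_lr] at hab
      cases c with
      | inl r =>
        rw [glueG_adj_ll] at hac
        rw [glueC_lr, glueC_ll]
        rcases hab with ⟨rfl, hq⟩ | ⟨hε, rfl, hq⟩
        · rw [if_pos rfl]
          intro hc
          exact hdisj _ ⟨r, hac, rfl⟩ ⟨q.1, hq, hc⟩
        · rw [if_neg (fun h => h12 h.symm)]
          intro hc
          exact hδ₂ hε ⟨r, hac, hc.symm⟩
      | inr r =>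
        rw [glueG_adj_lr] at hac
        rw [glueC_lr, glueC_lr]
        rcases hab with ⟨hp1, hq⟩ | ⟨hε, hp2, hq⟩
        · rcases hac with ⟨hp1', hr⟩ | ⟨hε', hp2', hr⟩
          · subst hp1
            rw [if_pos rfl, if_pos rfl]
            exact hcR hq hr (fun h => hbc (by rw [Subtype.ext h]))
          · exact absurd (hp1.symm.trans hp2') h12
        · rcases hac with ⟨hp1', hr⟩ | ⟨hε', hp2', hr⟩
          · exact absurd (hp1'.symm.trans hp2) h12
          · exact absurd (congrArg inr (Subtype.ext (hq.trans hr.symm))) hbc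
  | inr p =>
    cases b with
    | inl q =>
      rw [glueG_adj_rl] at hab
      cases c with
      | inl r =>
        rw [glueG_adj_rl] at hac
        rcases hab with ⟨hq1, hp⟩ | ⟨hε, hq2, hp⟩
        · rcases hac with ⟨hr1, _⟩ | ⟨_, _, hr⟩
          · exact absurd (by rw [hq1, hr1]) hbc
          · exact absurd hp (by rw [hr]; exact hR34)
        · rcases hac with ⟨_, hr⟩ | ⟨_, hr2, _⟩
          · exact absurd hr (by rw [hp]; exact hR34)
          · exact absurd (by rw [hq2, hr2]) hbc
      | inr r =>
        rw [glueG_adj_rr] at hac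
        rw [glueC_rl, glueC_rr]
        rcases hab with ⟨rfl, hq⟩ | ⟨hε, rfl, hq⟩
        · rw [if_pos rfl]
          have h1 : cR s(v₃, p.1) = cR s(p.1, v₃) := by rw [Sym2.eq_swap]
          rw [h1]
          exact hcR hq.symm hac (fun h => r.2 h.symm)
        · rw [if_neg (fun h => h12 h.symm)]
          intro hc
          refine hδ₄ hε ⟨r.1, hq ▸ hac, ?_⟩
          rw [← hq]
          exact hc.symm
    | inr q =>
      rw [glueG_adj_rr] at hab
      cases c with
      | inl r =>
        rw [glueG_adj_rl] at hac
        rw [glueC_rr, glueC_rl]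
        rcases hac with ⟨rfl, hr⟩ | ⟨hε, rfl, hr⟩
        · rw [if_pos rfl]
          have h1 : cR s(v₃, p.1) = cR s(p.1, v₃) := by rw [Sym2.eq_swap]
          rw [h1]
          exact hcR hab hr.symm q.2
        · rw [if_neg (fun h => h12 h.symm)]
          intro hc
          refine hδ₄ hε ⟨q.1, hr ▸ hab, ?_⟩
          rw [← hr]
          exact hc
      | inr r =>
        rw [glueG_adj_rr] at hac
        rw [glueC_rr, glueC_rr]
        refine hcR hab hac ?_
        intro h
        exact hbc (by rw [Subtype.ext h])


lemma map_adj_j₂ {x y : V₂} (h : HR.Adj x y) :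
    (glueG v₁ v₂ v₃ v₄ HL HR ε).Adj (j₂ v₁ v₃ x) (j₂ v₁ v₃ y) := by
  by_cases hx : x = v₃ <;> by_cases hy : y = v₃
  · exact absurd (hx ▸ hy ▸ h) (HR.irrefl)
  · rw [hx, j₂_v₃, j₂_ne hy, glueG_adj_lr]
    exact Or.inl ⟨rfl, hx ▸ h⟩
  · rw [hy, j₂_v₃, j₂_ne hx, glueG_adj_rl]
    exact Or.inl ⟨rfl, hy ▸ h.symm⟩
  · rw [j₂_ne hx, j₂_ne hy, glueG_adj_rr]
    exact h

lemma restrict_plain {C : Sym2 (V₁ ⊕ {x : V₂ // x ≠ v₃}) → Fin 3}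
    (hC : Proper (glueG v₁ v₂ v₃ v₄ HL HR ε) C) :
    Proper HR (fun p => C (Sym2.map (j₂ v₁ v₃) p)) := by
  intro a b c hab hac hbc
  simp only []
  rw [Sym2.map_pair_eq, Sym2.map_pair_eq]
  exact hC (map_adj_j₂ hab) (map_adj_j₂ hac)
    (fun h => hbc (j₂_injective h))

lemma restrict_left {G₁ : SimpleGraph V₁} {C : Sym2 (V₁ ⊕ {x : V₂ // x ≠ v₃}) → Fin 3}
    (hC : Proper (glueG v₁ v₂ v₃ v₄ (G₁.deleteEdges {s(v₁, v₂)}) HR ε) C) :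
    Proper (G₁.deleteEdges {s(v₁, v₂)}) (fun p => C (Sym2.map inl p)) := by
  intro a b c hab hac hbc
  simp only []
  rw [Sym2.map_pair_eq, Sym2.map_pair_eq]
  refine hC (glueG_adj_ll.mpr hab) (glueG_adj_ll.mpr hac) (fun h => hbc (by injection h))

lemma restrict_ext {G₁ : SimpleGraph V₁} (h12 : G₁.Adj v₁ v₂) (h43 : v₄ ≠ v₃)
    {HR' : SimpleGraph V₂}
    (hsub : ∀ ⦃a b : V₂⦄, HR'.Adj a b → s(a, b) = s(v₃, v₄) ∨ HR.Adj a b)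
    (hP₁ : ∀ (cL : Sym2 V₁ → Fin 3), Proper (G₁.deleteEdges {s(v₁, v₂)}) cL →
      ∀ γ : Fin 3, γ ∈ colAt (G₁.deleteEdges {s(v₁, v₂)}) cL v₁ ∨
        γ ∈ colAt (G₁.deleteEdges {s(v₁, v₂)}) cL v₂)
    {C : Sym2 (V₁ ⊕ {x : V₂ // x ≠ v₃}) → Fin 3}
    (hC : Proper (glueG v₁ v₂ v₃ v₄ (G₁.deleteEdges {s(v₁, v₂)}) HR True) C) :
    ∃ C' : Sym2 V₂ → Fin 3, Proper HR' C' := by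
  classical
  set K := glueG v₁ v₂ v₃ v₄ (G₁.deleteEdges {s(v₁, v₂)}) HR True with hK
  set γ : Fin 3 := C s(inl v₂, inr ⟨v₄, h43⟩) with hγdef
  set cL : Sym2 V₁ → Fin 3 := fun p => C (Sym2.map inl p) with hcL
  have hcLproper : Proper (G₁.deleteEdges {s(v₁, v₂)}) cL := restrict_left hC
  -- the special edge is adjacent in K
  have hKsp : K.Adj (inl v₂) (inr ⟨v₄, h43⟩) := by
    rw [hK, glueG_adj_lr]
    exact Or.inr ⟨trivial, rfl, rfl⟩
  -- γ is missing at v₂ on the left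
  have hγ₂ : γ ∉ colAt (G₁.deleteEdges {s(v₁, v₂)}) cL v₂ := by
    rintro ⟨z, hz, hzc⟩
    have hadj : K.Adj (inl v₂) (inl z) := glueG_adj_ll.mpr hz
    have h5 := hC hadj hKsp (by simp)
    have hzc' : C s(inl v₂, inl z) = γ := by simpa only [hcL, Sym2.map_pair_eq] using hzc
    exact h5 (hzc'.trans hγdef)
  have hγ₁ : γ ∈ colAt (G₁.deleteEdges {s(v₁, v₂)}) cL v₁ :=
    (hP₁ cL hcLproper γ).resolve_right hγ₂
  -- γ is distinct from colors of K-edges at inl v₁ that are mixed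
  have key₁ : ∀ (c : V₂) (hc : c ≠ v₃), HR.Adj v₃ c → γ ≠ C s(inl v₁, inr ⟨c, hc⟩) := by
    intro c hc hadj hcon
    obtain ⟨z, hz, hzc⟩ := hγ₁
    have h1 : K.Adj (inl v₁) (inl z) := glueG_adj_ll.mpr hz
    have h2 : K.Adj (inl v₁) (inr ⟨c, hc⟩) := by
      rw [hK, glueG_adj_lr]
      exact Or.inl ⟨rfl, hadj⟩
    have h5 := hC h1 h2 (by simp)
    apply h5
    have hzc' : C s(inl v₁, inl z) = γ := by simpa only [hcL, Sym2.map_pair_eq] using hzc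
    rw [hzc', hcon]
  -- γ is distinct from colors of K-edges at inr v₄
  have key₄ : ∀ (c : V₂) (hc : c ≠ v₃), HR.Adj v₄ c → γ ≠ C s(inr ⟨v₄, h43⟩, inr ⟨c, hc⟩) := by
    intro c hc hadj hcon
    have h1 : K.Adj (inr ⟨v₄, h43⟩) (inl v₂) := hKsp.symm
    have h2 : K.Adj (inr ⟨v₄, h43⟩) (inr ⟨c, hc⟩) := glueG_adj_rr.mpr hadj
    have h5 := hC h1 h2 (by simp)
    apply h5
    have hswap : (s(inr ⟨v₄, h43⟩, inl v₂) : Sym2 (V₁ ⊕ {x : V₂ // x ≠ v₃})) =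
        s(inl v₂, inr ⟨v₄, h43⟩) := Sym2.eq_swap
    rw [hswap, ← hγdef, hcon]
  refine ⟨fun p => if p = s(v₃, v₄) then γ else C (Sym2.map (j₂ v₁ v₃) p), ?_⟩
  intro a b c h_ab h_ac h_bc
  by_cases h1 : s(a, b) = s(v₃, v₄) <;> by_cases h2 : s(a, c) = s(v₃, v₄)
  · exact absurd (Sym2.congr_right.mp (h1.trans h2.symm)) h_bc
  · simp only [if_pos h1, if_neg h2]
    have hRac : HR.Adj a c := (hsub h_ac).resolve_left h2
    rcases Sym2.eq_iff.mp h1 with ⟨ha, hb⟩ | ⟨ha, hb⟩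
    · -- a = v₃, b = v₄
      have hc3 : c ≠ v₃ := (ha ▸ hRac).ne'
      have hmap : Sym2.map (j₂ v₁ v₃) s(a, c) = s(inl v₁, inr ⟨c, hc3⟩) := by
        rw [ha, Sym2.map_pair_eq, j₂_v₃, j₂_ne hc3]
      rw [hmap]
      exact key₁ c hc3 (ha ▸ hRac)
    · -- a = v₄, b = v₃
      have hc3 : c ≠ v₃ := fun hcc => h2 (by rw [hcc, ha, Sym2.eq_swap])
      have hmap : Sym2.map (j₂ v₁ v₃) s(a, c) = s(inr ⟨v₄, h43⟩, inr ⟨c, hc3⟩) := by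
        rw [ha, Sym2.map_pair_eq, j₂_ne h43, j₂_ne hc3]
      rw [hmap]
      exact key₄ c hc3 (ha ▸ hRac)
  · simp only [if_neg h1, if_pos h2]
    have hRab : HR.Adj a b := (hsub h_ab).resolve_left h1
    rcases Sym2.eq_iff.mp h2 with ⟨ha, hb⟩ | ⟨ha, hb⟩
    · have hb3 : b ≠ v₃ := (ha ▸ hRab).ne'
      have hmap : Sym2.map (j₂ v₁ v₃) s(a, b) = s(inl v₁, inr ⟨b, hb3⟩) := by
        rw [ha, Sym2.map_pair_eq, j₂_v₃, j₂_ne hb3]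
      rw [hmap]
      exact (key₁ b hb3 (ha ▸ hRab)).symm
    · have hb3 : b ≠ v₃ := fun hbb => h1 (by rw [hbb, ha, Sym2.eq_swap])
      have hmap : Sym2.map (j₂ v₁ v₃) s(a, b) = s(inr ⟨v₄, h43⟩, inr ⟨b, hb3⟩) := by
        rw [ha, Sym2.map_pair_eq, j₂_ne h43, j₂_ne hb3]
      rw [hmap]
      exact (key₄ b hb3 (ha ▸ hRab)).symm
  · simp only [if_neg h1, if_neg h2]
    have hRab : HR.Adj a b := (hsub h_ab).resolve_left h1
    have hRac : HR.Adj a c := (hsub h_ac).resolve_left h2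
    exact restrict_plain hC hRab hRac h_bc


lemma deg_u [Fintype V₁] [Fintype V₂] (h12 : v₁ ≠ v₂) :
    deg (glueG v₁ v₂ v₃ v₄ HL HR ε) (inl v₁) = deg HL v₁ + deg HR v₃ := by
  classical
  set K := glueG v₁ v₂ v₃ v₄ HL HR ε with hK
  set S : Set {x : V₂ // x ≠ v₃} := {y | HR.Adj v₃ y.1} with hS
  have hN : K.neighborSet (inl v₁) = (inl '' HL.neighborSet v₁) ∪ (inr '' S) := by
    ext w
    cases w with
    | inl y =>
      simp only [SimpleGraph.mem_neighborSet, Set.mem_union, Set.mem_image]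
      rw [hK, glueG_adj_ll]
      constructor
      · intro h; exact Or.inl ⟨y, h, rfl⟩
      · rintro (⟨z, hz, hzz⟩ | ⟨z, _, hzz⟩)
        · injection hzz with h'; exact h' ▸ hz
        · exact absurd hzz (by simp)
    | inr y =>
      simp only [SimpleGraph.mem_neighborSet, Set.mem_union, Set.mem_image]
      rw [hK, glueG_adj_lr]
      constructor
      · rintro (⟨_, h⟩ | ⟨_, h, _⟩)
        · exact Or.inr ⟨y, h, rfl⟩
        · exact absurd h.symm (fun hh => h12 hh.symm)
      · rintro (⟨z, _, hzz⟩ | ⟨z, hz, hzz⟩)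
        · exact absurd hzz (by simp)
        · injection hzz with h'
          exact Or.inl ⟨rfl, h' ▸ hz⟩
  have hdisj : Disjoint (inl '' HL.neighborSet v₁ : Set (V₁ ⊕ {x : V₂ // x ≠ v₃})) (inr '' S) := by
    rw [Set.disjoint_left]
    rintro w ⟨z, _, rfl⟩ ⟨z', _, hzz⟩
    exact absurd hzz (by simp)
  have hcS : S.ncard = deg HR v₃ := by
    have hval : Subtype.val '' S = HR.neighborSet v₃ := by
      ext x
      simp only [Set.mem_image, SimpleGraph.mem_neighborSet]
      constructor
      · rintro ⟨y, hy, rfl⟩; exact hy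
      · intro hx; exact ⟨⟨x, hx.ne'⟩, hx, rfl⟩
    rw [deg, ← hval, Set.ncard_image_of_injective _ Subtype.val_injective]
  rw [deg, hN, Set.ncard_union_eq hdisj (Set.toFinite _) (Set.toFinite _),
    Set.ncard_image_of_injective _ Sum.inl_injective,
    Set.ncard_image_of_injective _ Sum.inr_injective, hcS, deg, deg]

lemma glue_edge_cases {G₁ : SimpleGraph V₁} {G₂ : SimpleGraph V₂} (h12 : v₁ ≠ v₂)
    {q : Sym2 (V₁ ⊕ {x : V₂ // x ≠ v₃})}
    (hq : q ∈ (glueG v₁ v₂ v₃ v₄ (G₁.deleteEdges {s(v₁, v₂)})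
      (G₂.deleteEdges {s(v₃, v₄)}) True).edgeSet) :
    (∃ f ∈ G₁.edgeSet, f ≠ s(v₁, v₂) ∧ q = Sym2.map inl f) ∨
    (∃ f ∈ G₂.edgeSet, f ≠ s(v₃, v₄) ∧ q = Sym2.map (j₂ v₁ v₃) f) ∨
    (∃ h4 : v₄ ≠ v₃, q = s(inl v₂, inr ⟨v₄, h4⟩)) := by
  induction q with
  | _ a b =>
  have hadj : (glueG v₁ v₂ v₃ v₄ (G₁.deleteEdges {s(v₁, v₂)})
      (G₂.deleteEdges {s(v₃, v₄)}) True).Adj a b := hq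
  cases a with
  | inl x =>
    cases b with
    | inl y =>
      rw [glueG_adj_ll, SimpleGraph.deleteEdges_adj] at hadj
      refine Or.inl ⟨s(x, y), hadj.1, by simpa using hadj.2, by rw [Sym2.map_pair_eq]⟩
    | inr y =>
      rw [glueG_adj_lr] at hadj
      rcases hadj with ⟨rfl, hy⟩ | ⟨_, rfl, hy⟩
      · rw [SimpleGraph.deleteEdges_adj] at hy
        refine Or.inr (Or.inl ⟨s(v₃, y.1), hy.1, by simpa using hy.2, ?_⟩)
        rw [Sym2.map_pair_eq, j₂_v₃, j₂_ne y.2]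
      · refine Or.inr (Or.inr ⟨hy ▸ y.2, ?_⟩)
        have : y = ⟨v₄, hy ▸ y.2⟩ := Subtype.ext hy
        rw [← this]
  | inr x =>
    cases b with
    | inl y =>
      rw [glueG_adj_rl] at hadj
      rcases hadj with ⟨rfl, hx⟩ | ⟨_, rfl, hx⟩
      · rw [SimpleGraph.deleteEdges_adj] at hx
        refine Or.inr (Or.inl ⟨s(v₃, x.1), hx.1, by simpa using hx.2, ?_⟩)
        rw [Sym2.map_pair_eq, j₂_v₃, j₂_ne x.2, Sym2.eq_swap]
      · refine Or.inr (Or.inr ⟨hx ▸ x.2, ?_⟩)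
        have : x = ⟨v₄, hx ▸ x.2⟩ := Subtype.ext hx
        rw [← this, Sym2.eq_swap]
    | inr y =>
      rw [glueG_adj_rr, SimpleGraph.deleteEdges_adj] at hadj
      refine Or.inr (Or.inl ⟨s(x.1, y.1), hadj.1, by simpa using hadj.2, ?_⟩)
      rw [Sym2.map_pair_eq, j₂_ne x.2, j₂_ne y.2]

end Glue

/-- every color hits `a` or `b` in a proper coloring of `G - ab` when `G` is not
3-edge-colorable -/
lemma P_prop {G : SimpleGraph V} {a b : V} (hab : G.Adj a b)
    (hn3 : ¬ EdgeColorable G 3) {c : Sym2 V → Fin 3}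
    (hc : Proper (G.deleteEdges {s(a, b)}) c) (γ : Fin 3) :
    γ ∈ colAt (G.deleteEdges {s(a, b)}) c a ∨ γ ∈ colAt (G.deleteEdges {s(a, b)}) c b := by
  by_contra hcon
  push_neg at hcon
  exact hn3 (ec_of_proper (proper_extend hab hc γ hcon.1 hcon.2))

lemma inj2' : ∀ A B : Finset (Fin 3), ∀ γ β : Fin 3, A.card + B.card ≤ 3 → γ ∉ A → β ∈ B →
    ∃ π : Equiv.Perm (Fin 3), π β = γ ∧ ∀ b ∈ B, π b ∉ A := by decide

lemma inj3' : ∀ A B : Finset (Fin 3), ∀ γ δ : Fin 3, A.card + B.card ≤ 3 → γ ∉ B → δ ∈ A →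
    ∃ π : Equiv.Perm (Fin 3), π γ = δ ∧ ∀ b ∈ B, π b ∉ A := by decide

lemma inj1' : ∀ A B : Finset (Fin 3), A.card + B.card ≤ 3 →
    ∃ π : Equiv.Perm (Fin 3), ∀ b ∈ B, π b ∉ A := by decide


section Constructions
open Sum
variable {V₁ V₂ : Type*} [Fintype V₁] [Fintype V₂]
  {G₁ : SimpleGraph V₁} {G₂ : SimpleGraph V₂} {v₁ v₂ : V₁} {v₃ v₄ : V₂}

lemma glue_right_ec (h12 : G₁.Adj v₁ v₂) (hn31 : ¬ EdgeColorable G₁ 3)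
    (hd2 : deg G₁ v₂ ≤ 3)
    {cL : Sym2 V₁ → Fin 3} (hcL : Proper (G₁.deleteEdges {s(v₁, v₂)}) cL)
    {HR : SimpleGraph V₂} (hR34 : ¬ HR.Adj v₃ v₄)
    {cR : Sym2 V₂ → Fin 3} (hcR : Proper HR cR)
    {γ₂ : Fin 3} (hγ₃ : γ₂ ∉ colAt HR cR v₃) (hγ₄ : γ₂ ∉ colAt HR cR v₄)
    (hcard : (colAt (G₁.deleteEdges {s(v₁, v₂)}) cL v₁).ncard +
      (colAt HR cR v₃).ncard ≤ 3) :
    EdgeColorable (glueG v₁ v₂ v₃ v₄ (G₁.deleteEdges {s(v₁, v₂)}) HR True) 3 := by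
  classical
  set Gd := G₁.deleteEdges {s(v₁, v₂)} with hGd
  have hlt : (colAt Gd cL v₂).ncard < 3 :=
    lt_of_le_of_lt (colAt_ncard_le _ _ _) (lt_of_lt_of_le (deg_del_lt_right h12) hd2)
  obtain ⟨δ, hδ⟩ := exists_not_mem_of_ncard_lt hlt
  have hδ1 : δ ∈ colAt Gd cL v₁ := (P_prop h12 hn31 hcL δ).resolve_right hδ
  set A := (Set.toFinite (colAt Gd cL v₁)).toFinset with hA
  set B := (Set.toFinite (colAt HR cR v₃)).toFinset with hB
  have hcards : A.card + B.card ≤ 3 := by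
    rw [hA, hB, ← Set.ncard_eq_toFinset_card _ _, ← Set.ncard_eq_toFinset_card _ _]
    exact hcard
  obtain ⟨π, hπγ, hπB⟩ := inj3' A B γ₂ δ hcards
    (by rw [hB, Set.Finite.mem_toFinset]; exact hγ₃)
    (by rw [hA, Set.Finite.mem_toFinset]; exact hδ1)
  refine ec_of_proper (glue_proper (δ := δ) h12.ne hR34 hcL (hcR.comp π π.injective) ?_ ?_ ?_)
  · intro γ hγA hγ3
    rw [colAt_comp] at hγ3
    obtain ⟨b, hb, rfl⟩ := hγ3
    exact hπB b (by rw [hB, Set.Finite.mem_toFinset]; exact hb)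
      (by rw [hA, Set.Finite.mem_toFinset]; exact hγA)
  · exact fun _ => hδ
  · intro _
    rw [colAt_comp]
    rintro ⟨b, hb, hbe⟩
    exact hγ₄ ((π.injective (hbe.trans hπγ.symm)) ▸ hb)

lemma glue_left_ec (h34 : G₂.Adj v₃ v₄) (h12ne : v₁ ≠ v₂)
    (hn32 : ¬ EdgeColorable G₂ 3) (hd4 : deg G₂ v₄ ≤ 3)
    {HL : SimpleGraph V₁}
    {cL : Sym2 V₁ → Fin 3} (hcL : Proper HL cL)
    {γ₁ : Fin 3} (hγ₁ : γ₁ ∉ colAt HL cL v₁) (hγ₂ : γ₁ ∉ colAt HL cL v₂)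
    {cR : Sym2 V₂ → Fin 3} (hcR : Proper (G₂.deleteEdges {s(v₃, v₄)}) cR)
    (hcard : (colAt HL cL v₁).ncard +
      (colAt (G₂.deleteEdges {s(v₃, v₄)}) cR v₃).ncard ≤ 3) :
    EdgeColorable (glueG v₁ v₂ v₃ v₄ HL (G₂.deleteEdges {s(v₃, v₄)}) True) 3 := by
  classical
  set GR := G₂.deleteEdges {s(v₃, v₄)} with hGR
  have hR34 : ¬ GR.Adj v₃ v₄ := by
    rw [hGR, SimpleGraph.deleteEdges_adj]
    rintro ⟨_, h⟩
    exact h rfl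
  have hlt : (colAt GR cR v₄).ncard < 3 :=
    lt_of_le_of_lt (colAt_ncard_le _ _ _) (lt_of_lt_of_le (deg_del_lt_right h34) hd4)
  obtain ⟨β, hβ⟩ := exists_not_mem_of_ncard_lt hlt
  have hβ3 : β ∈ colAt GR cR v₃ := (P_prop h34 hn32 hcR β).resolve_right hβ
  set A := (Set.toFinite (colAt HL cL v₁)).toFinset with hA
  set B := (Set.toFinite (colAt GR cR v₃)).toFinset with hB
  have hcards : A.card + B.card ≤ 3 := by
    rw [hA, hB, ← Set.ncard_eq_toFinset_card _ _, ← Set.ncard_eq_toFinset_card _ _]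
    exact hcard
  obtain ⟨π, hπβ, hπB⟩ := inj2' A B γ₁ β hcards
    (by rw [hA, Set.Finite.mem_toFinset]; exact hγ₁)
    (by rw [hB, Set.Finite.mem_toFinset]; exact hβ3)
  refine ec_of_proper (glue_proper (δ := γ₁) h12ne hR34 hcL (hcR.comp π π.injective) ?_ ?_ ?_)
  · intro γ hγA hγ3
    rw [colAt_comp] at hγ3
    obtain ⟨b, hb, rfl⟩ := hγ3
    exact hπB b (by rw [hB, Set.Finite.mem_toFinset]; exact hb)
      (by rw [hA, Set.Finite.mem_toFinset]; exact hγA)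
  · exact fun _ => hγ₂
  · intro _
    rw [colAt_comp]
    rintro ⟨b, hb, hbe⟩
    exact hβ ((π.injective (hbe.trans hπβ.symm)) ▸ hb)

lemma glue_mid_ec (h12ne : v₁ ≠ v₂)
    {HL : SimpleGraph V₁} {HR : SimpleGraph V₂} (hR34 : ¬ HR.Adj v₃ v₄)
    {cL : Sym2 V₁ → Fin 3} (hcL : Proper HL cL)
    {cR : Sym2 V₂ → Fin 3} (hcR : Proper HR cR)
    (hcard : (colAt HL cL v₁).ncard + (colAt HR cR v₃).ncard ≤ 3) :
    EdgeColorable (glueG v₁ v₂ v₃ v₄ HL HR False) 3 := by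
  classical
  set A := (Set.toFinite (colAt HL cL v₁)).toFinset with hA
  set B := (Set.toFinite (colAt HR cR v₃)).toFinset with hB
  have hcards : A.card + B.card ≤ 3 := by
    rw [hA, hB, ← Set.ncard_eq_toFinset_card _ _, ← Set.ncard_eq_toFinset_card _ _]
    exact hcard
  obtain ⟨π, hπB⟩ := inj1' A B hcards
  refine ec_of_proper (glue_proper (δ := 0) h12ne hR34 hcL (hcR.comp π π.injective) ?_
    (fun h => h.elim) (fun h => h.elim))
  intro γ hγA hγ3
  rw [colAt_comp] at hγ3
  obtain ⟨b, hb, rfl⟩ := hγ3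
  exact hπB b (by rw [hB, Set.Finite.mem_toFinset]; exact hb)
    (by rw [hA, Set.Finite.mem_toFinset]; exact hγA)

end Constructions


section Main
open Sum
variable {V₁ V₂ : Type*} [Fintype V₁] [Fintype V₂]

lemma main_iff (G₁ : SimpleGraph V₁) (G₂ : SimpleGraph V₂) (v₁ v₂ : V₁) (v₃ v₄ : V₂)
    (h12 : G₁.Adj v₁ v₂) (h34 : G₂.Adj v₃ v₄)
    (h₁max : ∀ v, deg G₁ v ≤ 3) (h₂max : ∀ v, deg G₂ v ≤ 3)
    (h₁ : IsCritical 3 G₁)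
    (hKmax : ∀ v, deg (glueG v₁ v₂ v₃ v₄ (G₁.deleteEdges {s(v₁, v₂)})
      (G₂.deleteEdges {s(v₃, v₄)}) True) v ≤ 3) :
    IsCritical 3 (glueG v₁ v₂ v₃ v₄ (G₁.deleteEdges {s(v₁, v₂)})
      (G₂.deleteEdges {s(v₃, v₄)}) True) ↔ IsCritical 3 G₂ := by
  classical
  set Gd : SimpleGraph V₁ := G₁.deleteEdges {s(v₁, v₂)} with hGd
  set Gr : SimpleGraph V₂ := G₂.deleteEdges {s(v₃, v₄)} with hGr
  set K := glueG v₁ v₂ v₃ v₄ Gd Gr True with hKdef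
  have h12ne : v₁ ≠ v₂ := h12.ne
  have h43 : v₄ ≠ v₃ := h34.ne'
  have hR34 : ¬ Gr.Adj v₃ v₄ := by
    rw [hGr, SimpleGraph.deleteEdges_adj]
    rintro ⟨_, h⟩
    exact h rfl
  -- facts from criticality of G₁
  have hn31 : ¬ EdgeColorable G₁ 3 := not_ec_of_chromIndex h₁.2.2.1 (by omega)
  have hGdmax : ∀ v, deg Gd v ≤ 3 :=
    fun v => le_trans (deg_anti (SimpleGraph.deleteEdges_le _) v) (h₁max v)
  have hGrmax : ∀ v, deg Gr v ≤ 3 :=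
    fun v => le_trans (deg_anti (SimpleGraph.deleteEdges_le _) v) (h₂max v)
  have hc₁ : ∃ cL : Sym2 V₁ → Fin 3, Proper Gd cL := by
    have h3 := h₁.2.2.2 s(v₁, v₂) h12
    exact proper_of_ec (by omega) (ec_of_chromIndex h3 (ec_five (fun v =>
      le_trans (deg_anti (SimpleGraph.deleteEdges_le _) v) (h₁max v))))
  obtain ⟨c₁, hc₁p⟩ := hc₁
  have hP₁ : ∀ (cL : Sym2 V₁ → Fin 3), Proper (G₁.deleteEdges {s(v₁, v₂)}) cL →
      ∀ γ : Fin 3, γ ∈ colAt (G₁.deleteEdges {s(v₁, v₂)}) cL v₁ ∨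
        γ ∈ colAt (G₁.deleteEdges {s(v₁, v₂)}) cL v₂ :=
    fun cL h γ => P_prop h12 hn31 h γ
  have hdegsum : deg Gd v₁ + deg Gr v₃ ≤ 3 := by
    rw [← deg_u (HL := Gd) (HR := Gr) (ε := True) (v₂ := v₂) (v₄ := v₄) h12ne]
    exact hKmax (inl v₁)
  -- generic card bound
  have hcardb : ∀ (HL : SimpleGraph V₁) (HR : SimpleGraph V₂), HL ≤ Gd → HR ≤ Gr →
      ∀ (cL : Sym2 V₁ → Fin 3) (cR : Sym2 V₂ → Fin 3),
      (colAt HL cL v₁).ncard + (colAt HR cR v₃).ncard ≤ 3 := by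
    intro HL HR hL hR cL cR
    have h1 := le_trans (colAt_ncard_le HL cL v₁) (le_trans (deg_anti hL v₁) le_rfl)
    have h2 := le_trans (colAt_ncard_le HR cR v₃) (le_trans (deg_anti hR v₃) le_rfl)
    omega
  -- membership of the special edge
  have hspmem : s(inl v₂, inr ⟨v₄, h43⟩) ∈ K.edgeSet := by
    rw [SimpleGraph.mem_edgeSet, hKdef, glueG_adj_lr]
    exact Or.inr ⟨trivial, rfl, rfl⟩
  constructor
  · -- K critical → G₂ critical
    rintro ⟨hKdeg, hKex, hKchrom, hKdel⟩
    have hn3K : ¬ EdgeColorable K 3 := not_ec_of_chromIndex hKchrom (by omega)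
    -- G₂ is not 3-edge-colorable
    have hn32 : ¬ EdgeColorable G₂ 3 := by
      intro hec
      obtain ⟨c₂, hc₂p⟩ := proper_of_ec (by omega) hec
      have hcRp : Proper Gr c₂ := hc₂p.anti (SimpleGraph.deleteEdges_le _)
      set γ₂ : Fin 3 := c₂ s(v₃, v₄) with hγ₂def
      have hγ₃ : γ₂ ∉ colAt Gr c₂ v₃ := by
        rintro ⟨z, hz, hzc⟩
        rw [hGr, SimpleGraph.deleteEdges_adj] at hz
        have hz4 : z ≠ v₄ := fun hc => hz.2 (by rw [hc]; rfl)
        exact hc₂p hz.1 h34 hz4 (hzc.trans hγ₂def)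
      have hγ₄ : γ₂ ∉ colAt Gr c₂ v₄ := by
        rintro ⟨z, hz, hzc⟩
        rw [hGr, SimpleGraph.deleteEdges_adj] at hz
        have hz3 : z ≠ v₃ := by
          intro hc
          exact hz.2 (by rw [hc, Sym2.eq_swap]; rfl)
        have := hc₂p hz.1 h34.symm hz3
        rw [(Sym2.eq_swap : s(v₄, v₃) = s(v₃, v₄))] at this
        exact this (hzc.trans hγ₂def)
      exact hn3K (glue_right_ec h12 hn31 (h₁max v₂) hc₁p hR34 hcRp hγ₃ hγ₄
        (hcardb Gd Gr le_rfl le_rfl c₁ c₂))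
    -- deletion colorings for G₂
    have hd2col : ∀ e ∈ G₂.edgeSet, EdgeColorable (G₂.deleteEdges {e}) 3 := by
      intro e he
      by_cases hee : e = s(v₃, v₄)
      · subst hee
        have h5 := hKdel _ hspmem
        have hec := ec_of_chromIndex h5 (ec_five (fun v =>
          le_trans (deg_anti (SimpleGraph.deleteEdges_le _) v) (hKmax v)))
        rw [hKdef, del_special h12ne h43] at hec
        obtain ⟨C, hC⟩ := proper_of_ec (by omega) hec
        exact ec_of_proper (restrict_plain hC)
      · obtain ⟨a, b, hab, rfl⟩ := edgeSet_exists_rep he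
        have hGrab : Gr.Adj a b := by
          rw [hGr, SimpleGraph.deleteEdges_adj]
          exact ⟨hab, by simpa using hee⟩
        have hmem : Sym2.map (j₂ v₁ v₃) s(a, b) ∈ K.edgeSet := by
          rw [Sym2.map_pair_eq, SimpleGraph.mem_edgeSet]
          exact map_adj_j₂ hGrab
        have h5 := hKdel _ hmem
        have hec := ec_of_chromIndex h5 (ec_five (fun v =>
          le_trans (deg_anti (SimpleGraph.deleteEdges_le _) v) (hKmax v)))
        rw [hKdef, del_j₂ h12ne s(a, b) (SimpleGraph.not_isDiag_of_mem_edgeSet _ he)] at hec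
        obtain ⟨C, hC⟩ := proper_of_ec (by omega) hec
        have hsub : ∀ ⦃x y : V₂⦄, (G₂.deleteEdges {s(a, b)}).Adj x y →
            s(x, y) = s(v₃, v₄) ∨ (Gr.deleteEdges {s(a, b)}).Adj x y := by
          intro x y hxy
          rw [SimpleGraph.deleteEdges_adj] at hxy
          by_cases hxy2 : s(x, y) = s(v₃, v₄)
          · exact Or.inl hxy2
          · refine Or.inr ?_
            rw [SimpleGraph.deleteEdges_adj, hGr, SimpleGraph.deleteEdges_adj]
            exact ⟨⟨hxy.1, by simpa using hxy2⟩, hxy.2⟩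
        obtain ⟨C', hC'⟩ := restrict_ext h12 h43 hsub hP₁ hC
        exact ec_of_proper hC'
    have hd2 : ∀ e ∈ G₂.edgeSet, chromIndex (G₂.deleteEdges {e}) = 3 := by
      intro e he
      refine chromIndex_eq (hd2col e he) ?_
      intro hec2
      exact hn32 (ec_del_succ he (by omega) hec2)
    have hc2 : chromIndex G₂ = 4 := by
      refine chromIndex_eq ?_ hn32
      exact ec_del_succ (h34 : s(v₃, v₄) ∈ G₂.edgeSet) (by omega) (hd2col s(v₃, v₄) h34)
    exact ⟨h₂max, exists_deg_three h₂max hn32, hc2, hd2⟩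
  · -- G₂ critical → K critical
    rintro ⟨_, _, h2chrom, h2del⟩
    have hn32 : ¬ EdgeColorable G₂ 3 := not_ec_of_chromIndex h2chrom (by omega)
    have hc₂ : ∃ cR : Sym2 V₂ → Fin 3, Proper Gr cR := by
      have h3 := h2del s(v₃, v₄) h34
      exact proper_of_ec (by omega) (ec_of_chromIndex h3 (ec_five (fun v =>
        le_trans (deg_anti (SimpleGraph.deleteEdges_le _) v) (h₂max v))))
    obtain ⟨c₂, hc₂p⟩ := hc₂
    -- K is not 3-colorable
    have hn3K : ¬ EdgeColorable K 3 := by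
      intro hec
      obtain ⟨C, hC⟩ := proper_of_ec (by omega) hec
      have hsub : ∀ ⦃x y : V₂⦄, G₂.Adj x y → s(x, y) = s(v₃, v₄) ∨ Gr.Adj x y := by
        intro x y hxy
        by_cases h : s(x, y) = s(v₃, v₄)
        · exact Or.inl h
        · refine Or.inr ?_
          rw [hGr, SimpleGraph.deleteEdges_adj]
          exact ⟨hxy, by simpa using h⟩
      obtain ⟨C', hC'⟩ := restrict_ext h12 h43 hsub hP₁ hC
      exact hn32 (ec_of_proper hC')
    -- deletion colorings for K
    have hdKcol : ∀ e ∈ K.edgeSet, EdgeColorable (K.deleteEdges {e}) 3 := by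
      intro e he
      rcases glue_edge_cases h12ne he with ⟨f, hf, hfne, rfl⟩ | ⟨f, hf, hfne, rfl⟩ |
        ⟨h4, rfl⟩
      · -- deleted a left edge
        rw [hKdef, del_inl]
        have h3 := h₁.2.2.2 f hf
        obtain ⟨cA, hcA⟩ := proper_of_ec (by omega) (ec_of_chromIndex h3 (ec_five (fun v =>
          le_trans (deg_anti (SimpleGraph.deleteEdges_le _) v) (h₁max v))))
        set γ₁ : Fin 3 := cA s(v₁, v₂) with hγ₁def
        have hHLle : Gd.deleteEdges {f} ≤ G₁.deleteEdges {f} := by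
          intro x y hxy
          rw [SimpleGraph.deleteEdges_adj, hGd, SimpleGraph.deleteEdges_adj] at hxy
          rw [SimpleGraph.deleteEdges_adj]
          exact ⟨hxy.1.1, hxy.2⟩
        have hcLp : Proper (Gd.deleteEdges {f}) cA := hcA.anti hHLle
        have h12' : (G₁.deleteEdges {f}).Adj v₁ v₂ := by
          rw [SimpleGraph.deleteEdges_adj]
          exact ⟨h12, by simpa using (Ne.symm hfne)⟩
        have hγv₁ : γ₁ ∉ colAt (Gd.deleteEdges {f}) cA v₁ := by
          rintro ⟨z, hz, hzc⟩
          have hz' : (G₁.deleteEdges {f}).Adj v₁ z := hHLle hz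
          have hz2 : z ≠ v₂ := by
            rw [SimpleGraph.deleteEdges_adj, hGd, SimpleGraph.deleteEdges_adj] at hz
            intro hc
            exact hz.1.2 (by rw [hc]; rfl)
          exact hcA hz' h12' hz2 (hzc.trans hγ₁def)
        have hγv₂ : γ₁ ∉ colAt (Gd.deleteEdges {f}) cA v₂ := by
          rintro ⟨z, hz, hzc⟩
          have hz' : (G₁.deleteEdges {f}).Adj v₂ z := hHLle hz
          have hz1 : z ≠ v₁ := by
            rw [SimpleGraph.deleteEdges_adj, hGd, SimpleGraph.deleteEdges_adj] at hz
            intro hc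
            exact hz.1.2 (by rw [hc, Sym2.eq_swap]; rfl)
          have h5 := hcA hz' h12'.symm hz1
          rw [(Sym2.eq_swap : s(v₂, v₁) = s(v₁, v₂))] at h5
          exact h5 (hzc.trans hγ₁def)
        exact glue_left_ec h34 h12ne hn32 (h₂max v₄) hcLp hγv₁ hγv₂ hc₂p
          (hcardb _ _ (SimpleGraph.deleteEdges_le _) le_rfl cA c₂)
      · -- deleted a right edge
        rw [hKdef, del_j₂ h12ne f (SimpleGraph.not_isDiag_of_mem_edgeSet _ hf)]
        have h3 := h2del f hf
        obtain ⟨cB, hcB⟩ := proper_of_ec (by omega) (ec_of_chromIndex h3 (ec_five (fun v =>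
          le_trans (deg_anti (SimpleGraph.deleteEdges_le _) v) (h₂max v))))
        set γ₂ : Fin 3 := cB s(v₃, v₄) with hγ₂def
        have hHRle : Gr.deleteEdges {f} ≤ G₂.deleteEdges {f} := by
          intro x y hxy
          rw [SimpleGraph.deleteEdges_adj, hGr, SimpleGraph.deleteEdges_adj] at hxy
          rw [SimpleGraph.deleteEdges_adj]
          exact ⟨hxy.1.1, hxy.2⟩
        have hcRp : Proper (Gr.deleteEdges {f}) cB := hcB.anti hHRle
        have h34' : (G₂.deleteEdges {f}).Adj v₃ v₄ := by
          rw [SimpleGraph.deleteEdges_adj]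
          exact ⟨h34, by simpa using (Ne.symm hfne)⟩
        have hγv₃ : γ₂ ∉ colAt (Gr.deleteEdges {f}) cB v₃ := by
          rintro ⟨z, hz, hzc⟩
          have hz' : (G₂.deleteEdges {f}).Adj v₃ z := hHRle hz
          have hz4 : z ≠ v₄ := by
            rw [SimpleGraph.deleteEdges_adj, hGr, SimpleGraph.deleteEdges_adj] at hz
            intro hc
            exact hz.1.2 (by rw [hc]; rfl)
          exact hcB hz' h34' hz4 (hzc.trans hγ₂def)
        have hγv₄ : γ₂ ∉ colAt (Gr.deleteEdges {f}) cB v₄ := by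
          rintro ⟨z, hz, hzc⟩
          have hz' : (G₂.deleteEdges {f}).Adj v₄ z := hHRle hz
          have hz3 : z ≠ v₃ := by
            rw [SimpleGraph.deleteEdges_adj, hGr, SimpleGraph.deleteEdges_adj] at hz
            intro hc
            exact hz.1.2 (by rw [hc, Sym2.eq_swap]; rfl)
          have h5 := hcB hz' h34'.symm hz3
          rw [(Sym2.eq_swap : s(v₄, v₃) = s(v₃, v₄))] at h5
          exact h5 (hzc.trans hγ₂def)
        have hR34' : ¬ (Gr.deleteEdges {f}).Adj v₃ v₄ := by
          rw [SimpleGraph.deleteEdges_adj]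
          rintro ⟨h', _⟩
          exact hR34 h'
        exact glue_right_ec h12 hn31 (h₁max v₂) hc₁p hR34' hcRp hγv₃ hγv₄
          (hcardb _ _ le_rfl (SimpleGraph.deleteEdges_le _) c₁ cB)
      · -- deleted the middle edge
        have hrw : (⟨v₄, h4⟩ : {x : V₂ // x ≠ v₃}) = ⟨v₄, h43⟩ := rfl
        rw [hKdef, hrw, del_special h12ne h43]
        exact glue_mid_ec h12ne hR34 hc₁p hc₂p (hcardb Gd Gr le_rfl le_rfl c₁ c₂)
    have hdK : ∀ e ∈ K.edgeSet, chromIndex (K.deleteEdges {e}) = 3 := by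
      intro e he
      refine chromIndex_eq (hdKcol e he) ?_
      intro hec2
      exact hn3K (ec_del_succ he (by omega) hec2)
    have hcK : chromIndex K = 4 := by
      refine chromIndex_eq ?_ hn3K
      exact ec_del_succ hspmem (by omega) (hdKcol _ hspmem)
    exact ⟨hKmax, exists_deg_three hKmax hn3K, hcK, hdK⟩

end Main

end HJ


/-- Let `G₁`, `G₂` have maximum degree at most 3, with `G₁`
3-critical.  If `G` has maximum degree at most 3 and is a Hajós join of `G₁`
and `G₂`, then `G` is 3-critical iff `G₂` is 3-critical. -/
theorem stmt_3 {V₁ V₂ W : Type} [Fintype V₁] [Fintype V₂] [Fintype W]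
    (G₁ : SimpleGraph V₁) (G₂ : SimpleGraph V₂) (G : SimpleGraph W)
    (h₁max : ∀ v, deg G₁ v ≤ 3) (h₂max : ∀ v, deg G₂ v ≤ 3)
    (h₁ : IsCritical 3 G₁)
    (hGmax : ∀ v, deg G v ≤ 3)
    (hJ : IsHajosJoin G G₁ G₂) :
    IsCritical 3 G ↔ IsCritical 3 G₂ := by
  classical
  obtain ⟨v₁, v₂, v₃, v₄, h12, h34, ⟨φ⟩⟩ := hJ
  have hHmax : ∀ v, deg (hajosJoin G₁ G₂ v₁ v₂ v₃ v₄) v ≤ 3 := by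
    intro v
    have h1 := HJ.iso_deg φ (φ.symm v)
    rw [(by simp : φ (φ.symm v) = v)] at h1
    rw [← h1]
    exact hGmax _
  have hKmax : ∀ v, deg (HJ.glueG v₁ v₂ v₃ v₄ (G₁.deleteEdges {s(v₁, v₂)})
      (G₂.deleteEdges {s(v₃, v₄)}) True) v ≤ 3 := by
    rw [← HJ.hajosJoin_eq G₁ G₂ h34]
    exact hHmax
  have hmain := HJ.main_iff G₁ G₂ v₁ v₂ v₃ v₄ h12 h34 h₁max h₂max h₁ hKmax
  rw [HJ.iso_critical φ 3, HJ.hajosJoin_eq G₁ G₂ h34]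
  exact hmain
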